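/- Under the embedding V × N ⊂ W × N_0 given by W = V ⊕ V*, v ↦ (v,0), x ↦ (x,x^t), if (v,x) lies in the enhanced orbit O_{μ;ν} (for GL(V)), then ((v,0),(x,x^t)) lies in the exotic orbit with the same label (μ;ν), and its Jordan type as a nilpotent endomorphism of W is λ∪λ, i.e., the GL(W)-orbit of (v,0) paired with (x,x^t) in W × N(W) is O_{μ∪μ; ν∪ν}. -/

import Mathlib

open Matrix

/-- Jordan nilpotent matrix with distinct block sizes `d h` and multiplicities `nh h`. -/
def jordanMatrix (k : Type*) [Field k] (m : ℕ) (d nh : Fin m → ℕ) :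
    Matrix (Σ h : Fin m, Fin (nh h) × Fin (d h)) (Σ h : Fin m, Fin (nh h) × Fin (d h)) k :=
  fun a b =>
    if a.1 = b.1 ∧ (a.2.1 : ℕ) = (b.2.1 : ℕ) ∧ (a.2.2 : ℕ) + 1 = (b.2.2 : ℕ) then 1 else 0

/-- The standard representative vector `v = Σ_h v_{i(h), j_h}` of the enhanced orbit
`O_{μ;ν}`, where `μ` takes value `j h` on block `h`. -/
def enhVector (k : Type*) [Field k] (m : ℕ) (d nh j : Fin m → ℕ) :
    (Σ h : Fin m, Fin (nh h) × Fin (d h)) → k :=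
  fun a => if (a.2.1 : ℕ) = 0 ∧ 0 < j a.1 ∧ (a.2.2 : ℕ) = j a.1 - 1 then 1 else 0

/-- The value of `μ` on the block after `h` (`0` beyond the last block). -/
def jNext (m : ℕ) (j : Fin m → ℕ) (h : Fin m) : ℕ :=
  if hlt : h.val + 1 < m then j ⟨h.val + 1, hlt⟩ else 0

/-- `h ∈ J` iff `j_h > j_{h+1}` and `k_h < k_{h-1}` (with `k_0 = ∞`). -/
def inJ (m : ℕ) (j kk : Fin m → ℕ) (h : Fin m) : Bool :=
  decide (jNext m j h < j h) &&
    (decide (h.val = 0) ||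
      decide (kk h < kk ⟨h.val - 1, lt_of_le_of_lt (Nat.sub_le _ _) h.isLt⟩))

/-- The size `n_{l_h} - 1` (if `h ∈ J`) or `n_{l_h}` (otherwise). -/
def sz (m : ℕ) (nh j kk : Fin m → ℕ) (h : Fin m) : ℕ :=
  if inJ m j kk h then nh h - 1 else nh h

/-- The number of indices `i` lying in blocks before `h`. -/
def offset (m : ℕ) (nh : Fin m → ℕ) (h : Fin m) : ℕ :=
  ∑ h' ∈ Finset.univ.filter (fun h' => h' < h), nh h'

/-- `b(μ;ν) = |ν| + 2n(μ) + 2n(ν)`, computed from the block data (0-indexed `n(·)`). -/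
def bQ (m : ℕ) (nh j kk : Fin m → ℕ) : ℕ :=
  (∑ h, nh h * kk h) +
    2 * ∑ h, ∑ t ∈ Finset.range (nh h), (offset m nh h + t) * (j h + kk h)

/-- The stabilizer in `GL` of the pair `(v, J)`. -/
def enhStabilizer (k : Type*) [Field k] {ι : Type*} [Fintype ι] [DecidableEq ι]
    (J : Matrix ι ι k) (v : ι → k) : Subgroup (GL ι k) where
  carrier := {g | (g : Matrix ι ι k) * J = J * (g : Matrix ι ι k) ∧
    (g : Matrix ι ι k) *ᵥ v = v}
  one_mem' := by simp
  mul_mem' := by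
    intro a b ha hb
    obtain ⟨ha1, ha2⟩ := ha
    obtain ⟨hb1, hb2⟩ := hb
    constructor
    · show (↑(a * b) : Matrix ι ι k) * J = J * (↑(a * b) : Matrix ι ι k)
      rw [Units.val_mul, mul_assoc, hb1, ← mul_assoc, ha1, mul_assoc]
    · show (↑(a * b) : Matrix ι ι k) *ᵥ v = v
      rw [Units.val_mul, ← Matrix.mulVec_mulVec, hb2, ha2]
  inv_mem' := by
    intro u hu
    obtain ⟨hu1, hu2⟩ := hu
    constructor
    · show (↑u⁻¹ : Matrix ι ι k) * J = J * (↑u⁻¹ : Matrix ι ι k)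
      calc (↑u⁻¹ : Matrix ι ι k) * J
          = (↑u⁻¹ : Matrix ι ι k) * J * 1 := (mul_one _).symm
        _ = (↑u⁻¹ : Matrix ι ι k) * J * ((↑u : Matrix ι ι k) * (↑u⁻¹ : Matrix ι ι k)) := by
            rw [Units.mul_inv]
        _ = (↑u⁻¹ : Matrix ι ι k) * (J * (↑u : Matrix ι ι k)) * (↑u⁻¹ : Matrix ι ι k) := by
            simp only [mul_assoc]
        _ = (↑u⁻¹ : Matrix ι ι k) * ((↑u : Matrix ι ι k) * J) * (↑u⁻¹ : Matrix ι ι k) := by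
            rw [hu1]
        _ = ((↑u⁻¹ : Matrix ι ι k) * (↑u : Matrix ι ι k)) * (J * (↑u⁻¹ : Matrix ι ι k)) := by
            simp only [mul_assoc]
        _ = J * (↑u⁻¹ : Matrix ι ι k) := by rw [Units.inv_mul, one_mul]
    · show (↑u⁻¹ : Matrix ι ι k) *ᵥ v = v
      conv_lhs => rw [← hu2]
      rw [Matrix.mulVec_mulVec, Units.inv_mul, Matrix.one_mulVec]

/-- The subgroup of `GL ι k` preserving the bilinear form given by the Gram matrix `Ω`. -/
def sympGL (k : Type*) [Field k] {ι : Type*} [Fintype ι] [DecidableEq ι]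
    (Ω : Matrix ι ι k) : Subgroup (GL ι k) where
  carrier := {g | (g : Matrix ι ι k)ᵀ * Ω * (g : Matrix ι ι k) = Ω}
  one_mem' := by simp
  mul_mem' := by
    intro a b ha hb
    show (↑(a * b) : Matrix ι ι k)ᵀ * Ω * (↑(a * b) : Matrix ι ι k) = Ω
    have h : ((↑b : Matrix ι ι k)ᵀ * ((↑a : Matrix ι ι k)ᵀ * Ω * (↑a : Matrix ι ι k)) *
          (↑b : Matrix ι ι k))
        = ((↑(a * b) : Matrix ι ι k)ᵀ * Ω * (↑(a * b) : Matrix ι ι k)) := by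
      rw [Units.val_mul, Matrix.transpose_mul]; noncomm_ring
    rw [← h, ha]; exact hb
  inv_mem' := by
    intro u hu
    show (↑u⁻¹ : Matrix ι ι k)ᵀ * Ω * (↑u⁻¹ : Matrix ι ι k) = Ω
    have e1 : ((↑u⁻¹ : Matrix ι ι k)ᵀ * (↑u : Matrix ι ι k)ᵀ) = 1 := by
      rw [← Matrix.transpose_mul, Units.mul_inv, Matrix.transpose_one]
    calc (↑u⁻¹ : Matrix ι ι k)ᵀ * Ω * (↑u⁻¹ : Matrix ι ι k)
        = (↑u⁻¹ : Matrix ι ι k)ᵀ * ((↑u : Matrix ι ι k)ᵀ * Ω * (↑u : Matrix ι ι k)) *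
            (↑u⁻¹ : Matrix ι ι k) := by rw [hu]
      _ = ((↑u⁻¹ : Matrix ι ι k)ᵀ * (↑u : Matrix ι ι k)ᵀ) * Ω *
            ((↑u : Matrix ι ι k) * (↑u⁻¹ : Matrix ι ι k)) := by noncomm_ring
      _ = Ω := by rw [e1, Units.mul_inv, one_mul, mul_one]

/-- The Gram matrix of the symplectic form on `W = V ⊕ V*` in the symmetric Jordan
basis `{w_{ij}}`: within each block `h` (now of multiplicity `2 nh h`), index `i` pairs
with `2 nh h - 1 - i` in reversed position, with sign `+1` on the `V`-side. -/
def omegaMat (k : Type*) [Field k] (m : ℕ) (d nh : Fin m → ℕ) :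
    Matrix (Σ h : Fin m, Fin (2 * nh h) × Fin (d h))
      (Σ h : Fin m, Fin (2 * nh h) × Fin (d h)) k :=
  fun a b =>
    if a.1 = b.1 ∧ (a.2.1 : ℕ) + (b.2.1 : ℕ) = 2 * nh a.1 - 1 ∧
        (a.2.2 : ℕ) + (b.2.2 : ℕ) = d a.1 - 1 then
      (if (a.2.1 : ℕ) < nh a.1 then 1 else -1)
    else 0

/-- The stabilizer in `Sp(W)` of the exotic representative
`(w, y) = (Σ_h w_{i(h),j_h}, J_{λ∪λ})`. -/
def exoticStabilizer (k : Type*) [Field k] (m : ℕ) (d nh j : Fin m → ℕ) :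
    Subgroup (GL (Σ h : Fin m, Fin (2 * nh h) × Fin (d h)) k) :=
  sympGL k (omegaMat k m d nh) ⊓
    enhStabilizer k (jordanMatrix k m d (fun h => 2 * nh h))
      (enhVector k m d (fun h => 2 * nh h) j)

/-- The embedding `End(V) → End(W)`, `x ↦ (x, xᵗ)`, written in the symmetric Jordan
basis `{w_{ij}}` of `W = V ⊕ V*` (within block `h`, indices `i < nh h` form the
`V`-side and `i ≥ nh h` the dual side, with reversed positions). -/
def embMatrix (k : Type*) [Field k] (m : ℕ) (d nh : Fin m → ℕ)
    (A : Matrix (Σ h : Fin m, Fin (nh h) × Fin (d h))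
      (Σ h : Fin m, Fin (nh h) × Fin (d h)) k) :
    Matrix (Σ h : Fin m, Fin (2 * nh h) × Fin (d h))
      (Σ h : Fin m, Fin (2 * nh h) × Fin (d h)) k :=
  fun a b =>
    if ha : (a.2.1 : ℕ) < nh a.1 then
      if hb : (b.2.1 : ℕ) < nh b.1 then
        A ⟨a.1, (⟨a.2.1, ha⟩, a.2.2)⟩ ⟨b.1, (⟨b.2.1, hb⟩, b.2.2)⟩
      else 0
    else
      if hb : (b.2.1 : ℕ) < nh b.1 then 0
      else
        A ⟨b.1, (⟨2 * nh b.1 - 1 - (b.2.1 : ℕ), by have := b.2.1.isLt; omega⟩,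
              ⟨d b.1 - 1 - (b.2.2 : ℕ), by have := b.2.2.isLt; omega⟩)⟩
          ⟨a.1, (⟨2 * nh a.1 - 1 - (a.2.1 : ℕ), by have := a.2.1.isLt; omega⟩,
              ⟨d a.1 - 1 - (a.2.2 : ℕ), by have := a.2.2.isLt; omega⟩)⟩

/-- The embedding `V → W = V ⊕ V*`, `v ↦ (v, 0)`, in the bases above. -/
def embVec (k : Type*) [Field k] (m : ℕ) (d nh : Fin m → ℕ)
    (v : (Σ h : Fin m, Fin (nh h) × Fin (d h)) → k) :
    (Σ h : Fin m, Fin (2 * nh h) × Fin (d h)) → k :=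
  fun a =>
    if ha : (a.2.1 : ℕ) < nh a.1 then v ⟨a.1, (⟨a.2.1, ha⟩, a.2.2)⟩ else 0

set_option linter.unusedSectionVars false

namespace S19

variable {k : Type*} [Field k] {m : ℕ} (d nh : Fin m → ℕ)

def up (a : Σ h : Fin m, Fin (nh h) × Fin (d h)) : Σ h : Fin m, Fin (2 * nh h) × Fin (d h) :=
  ⟨a.1, (⟨a.2.1, by have := a.2.1.isLt; omega⟩, a.2.2)⟩

def dn (a : Σ h : Fin m, Fin (nh h) × Fin (d h)) : Σ h : Fin m, Fin (2 * nh h) × Fin (d h) :=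
  ⟨a.1, (⟨2 * nh a.1 - 1 - a.2.1, by have := a.2.1.isLt; omega⟩,
    ⟨d a.1 - 1 - a.2.2, by have := a.2.2.isLt; omega⟩)⟩

lemma mk_eq1 {h : Fin m} {i i' : Fin (nh h)} {t t' : Fin (d h)} (hi : (i : ℕ) = i')
    (ht : (t : ℕ) = t') :
    (⟨h, (i, t)⟩ : Σ h : Fin m, Fin (nh h) × Fin (d h)) = ⟨h, (i', t')⟩ := by
  congr 1
  exact Prod.ext (Fin.ext hi) (Fin.ext ht)

def eE : ((Σ h : Fin m, Fin (nh h) × Fin (d h)) ⊕ (Σ h : Fin m, Fin (nh h) × Fin (d h)))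
    ≃ (Σ h : Fin m, Fin (2 * nh h) × Fin (d h)) where
  toFun := Sum.elim (up d nh) (dn d nh)
  invFun a := if h : (a.2.1 : ℕ) < nh a.1 then .inl ⟨a.1, (⟨a.2.1, h⟩, a.2.2)⟩
    else .inr ⟨a.1, (⟨2 * nh a.1 - 1 - a.2.1, by have := a.2.1.isLt; omega⟩,
      ⟨d a.1 - 1 - a.2.2, by have := a.2.2.isLt; omega⟩)⟩
  left_inv s := by
    rcases s with ⟨h, i, t⟩ | ⟨h, i, t⟩
    · dsimp only [Sum.elim_inl, up]
      rw [dif_pos i.isLt]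
    · have hi := i.isLt; have ht := t.isLt
      dsimp only [Sum.elim_inr, dn]
      rw [dif_neg (by first | omega | (simp only [Fin.val_mk]; omega))]
      exact congrArg Sum.inr
        (mk_eq1 d nh (by first | omega | (simp only [Fin.val_mk]; omega)) (by first | omega | (simp only [Fin.val_mk]; omega)))
  right_inv a := by
    obtain ⟨h, i, t⟩ := a
    have hi := i.isLt; have ht := t.isLt
    dsimp only
    by_cases hc : (i : ℕ) < nh h
    · rw [dif_pos hc]
      rfl
    · rw [dif_neg hc]
      dsimp only [Sum.elim_inr, dn]
      exact mk_eq1 d (fun h => 2 * nh h) (by first | omega | (simp only [Fin.val_mk]; omega))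
        (by first | omega | (simp only [Fin.val_mk]; omega))

@[simp] lemma eE_inl (a) : eE d nh (Sum.inl a) = up d nh a := rfl
@[simp] lemma eE_inr (a) : eE d nh (Sum.inr a) = dn d nh a := rfl

lemma matrix_ext_e {M N : Matrix (Σ h : Fin m, Fin (2 * nh h) × Fin (d h))
    (Σ h : Fin m, Fin (2 * nh h) × Fin (d h)) k}
    (H : ∀ s t, M (eE d nh s) (eE d nh t) = N (eE d nh s) (eE d nh t)) : M = N := by
  ext a b
  have := H ((eE d nh).symm a) ((eE d nh).symm b)
  simpa using this

lemma fun_ext_e {f g : (Σ h : Fin m, Fin (2 * nh h) × Fin (d h)) → k}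
    (H : ∀ s, f (eE d nh s) = g (eE d nh s)) : f = g := by
  funext a
  have := H ((eE d nh).symm a)
  simpa using this

lemma embMatrix_eq (A : Matrix (Σ h : Fin m, Fin (nh h) × Fin (d h))
    (Σ h : Fin m, Fin (nh h) × Fin (d h)) k) :
    embMatrix k m d nh A
      = (Matrix.fromBlocks A 0 0 Aᵀ).submatrix (eE d nh).symm (eE d nh).symm := by
  apply matrix_ext_e
  rintro (⟨ha, ia, ta⟩ | ⟨ha, ia, ta⟩) (⟨hb, ib, tb⟩ | ⟨hb, ib, tb⟩) <;>
    simp only [Matrix.submatrix_apply, Equiv.symm_apply_apply] <;>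
    dsimp +instances only [eE_inl, eE_inr, up, dn] <;>
    simp only [eE_inl, eE_inr, up, dn, embMatrix, Matrix.fromBlocks, Matrix.of_apply,
      Sum.elim_inl, Sum.elim_inr, Matrix.transpose_apply, Matrix.zero_apply]
  · rw [dif_pos ia.isLt, dif_pos ib.isLt]
  · have hia := ia.isLt; have hib := ib.isLt
    rw [dif_pos ia.isLt, dif_neg (by first | omega | (simp only [Fin.val_mk]; omega))]
  · have hia := ia.isLt; have hib := ib.isLt
    rw [dif_neg (by first | omega | (simp only [Fin.val_mk]; omega)), dif_pos ib.isLt]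
  · have hia := ia.isLt; have hib := ib.isLt
    have hta := ta.isLt; have htb := tb.isLt
    rw [dif_neg (by first | omega | (simp only [Fin.val_mk]; omega)), dif_neg (by first | omega | (simp only [Fin.val_mk]; omega))]
    refine congrArg₂ A ?_ ?_ <;> exact mk_eq1 d nh (by first | omega | (simp only [Fin.val_mk]; omega)) (by first | omega | (simp only [Fin.val_mk]; omega))

lemma jordan_eq : jordanMatrix k m d (fun h => 2 * nh h)
    = (Matrix.fromBlocks (jordanMatrix k m d nh) 0 0 (jordanMatrix k m d nh)ᵀ).submatrix
        (eE d nh).symm (eE d nh).symm := by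
  apply matrix_ext_e
  rintro (⟨ha, ia, ta⟩ | ⟨ha, ia, ta⟩) (⟨hb, ib, tb⟩ | ⟨hb, ib, tb⟩) <;>
    simp only [Matrix.submatrix_apply, Equiv.symm_apply_apply] <;>
    dsimp +instances only [eE_inl, eE_inr, up, dn] <;>
    simp only [eE_inl, eE_inr, up, dn, jordanMatrix, Matrix.fromBlocks, Matrix.of_apply,
      Sum.elim_inl, Sum.elim_inr, Matrix.transpose_apply, Matrix.zero_apply]
  · rw [if_neg]
    rintro ⟨rfl, c2, c3⟩
    have hia := ia.isLt; have hib := ib.isLt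
    omega
  · rw [if_neg]
    rintro ⟨rfl, c2, c3⟩
    have hia := ia.isLt; have hib := ib.isLt
    omega
  · have hia := ia.isLt; have hib := ib.isLt
    have hta := ta.isLt; have htb := tb.isLt
    by_cases h2 : hb = ha ∧ (ib : ℕ) = (ia : ℕ) ∧ (tb : ℕ) + 1 = (ta : ℕ)
    · obtain ⟨rfl, c2, c3⟩ := h2
      rw [if_pos ⟨rfl, by omega, by omega⟩, if_pos ⟨rfl, by omega, by omega⟩]
    · rw [if_neg, if_neg h2]
      rintro ⟨rfl, c2, c3⟩
      exact h2 ⟨rfl, by omega, by omega⟩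

lemma omega_eq : omegaMat k m d nh
    = (Matrix.fromBlocks 0 1 (-1) (0 : Matrix (Σ h : Fin m, Fin (nh h) × Fin (d h))
        (Σ h : Fin m, Fin (nh h) × Fin (d h)) k)).submatrix (eE d nh).symm (eE d nh).symm := by
  apply matrix_ext_e
  rintro (⟨ha, ia, ta⟩ | ⟨ha, ia, ta⟩) (⟨hb, ib, tb⟩ | ⟨hb, ib, tb⟩) <;>
    simp only [Matrix.submatrix_apply, Equiv.symm_apply_apply] <;>
    dsimp +instances only [eE_inl, eE_inr, up, dn] <;>
    simp only [eE_inl, eE_inr, up, dn, omegaMat, Matrix.fromBlocks, Matrix.of_apply,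
      Sum.elim_inl, Sum.elim_inr, Matrix.neg_apply, Matrix.zero_apply, Matrix.one_apply] <;>
    (have hia := ia.isLt) <;> (have hib := ib.isLt) <;>
    (have hta := ta.isLt) <;> (have htb := tb.isLt)
  · rw [if_neg]
    rintro ⟨rfl, c2, c3⟩
    omega
  · by_cases h2 : (⟨ha, (ia, ta)⟩ : Σ h : Fin m, Fin (nh h) × Fin (d h)) = ⟨hb, (ib, tb)⟩
    · injection h2 with e1 e2
      subst e1
      injection eq_of_heq e2 with e3 e4
      subst e3; subst e4
      rw [if_pos ⟨rfl, by omega, by omega⟩, if_pos rfl, if_pos (by first | omega | (simp only [Fin.val_mk]; omega))]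
    · rw [if_neg h2, if_neg]
      rintro ⟨rfl, c2, c3⟩
      exact h2 (mk_eq1 d nh (by first | omega | (simp only [Fin.val_mk]; omega)) (by first | omega | (simp only [Fin.val_mk]; omega)))
  · by_cases h2 : (⟨ha, (ia, ta)⟩ : Σ h : Fin m, Fin (nh h) × Fin (d h)) = ⟨hb, (ib, tb)⟩
    · injection h2 with e1 e2
      subst e1
      injection eq_of_heq e2 with e3 e4
      subst e3; subst e4
      rw [if_pos ⟨rfl, by omega, by omega⟩, if_pos rfl, if_neg (by first | omega | (simp only [Fin.val_mk]; omega))]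
    · rw [if_neg h2, neg_zero, if_neg]
      rintro ⟨rfl, c2, c3⟩
      exact h2 (mk_eq1 d nh (by first | omega | (simp only [Fin.val_mk]; omega)) (by first | omega | (simp only [Fin.val_mk]; omega)))
  · rw [if_neg]
    rintro ⟨rfl, c2, c3⟩
    omega

lemma embVec_eq (v : (Σ h : Fin m, Fin (nh h) × Fin (d h)) → k) :
    embVec k m d nh v = Sum.elim v 0 ∘ (eE d nh).symm := by
  apply fun_ext_e
  rintro (⟨ha, ia, ta⟩ | ⟨ha, ia, ta⟩) <;>
    simp only [Function.comp_apply, Equiv.symm_apply_apply] <;>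
    dsimp +instances only [eE_inl, eE_inr, up, dn] <;>
    simp only [eE_inl, eE_inr, up, dn, embVec, Sum.elim_inl, Sum.elim_inr]
  · rw [dif_pos ia.isLt]
  · have hia := ia.isLt
    rw [dif_neg (by first | omega | (simp only [Fin.val_mk]; omega))]
    rfl

lemma enhVector_eq (j : Fin m → ℕ) :
    enhVector k m d (fun h => 2 * nh h) j
      = Sum.elim (enhVector k m d nh j) 0 ∘ (eE d nh).symm := by
  apply fun_ext_e
  rintro (⟨ha, ia, ta⟩ | ⟨ha, ia, ta⟩) <;>
    simp only [Function.comp_apply, Equiv.symm_apply_apply] <;>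
    dsimp +instances only [eE_inl, eE_inr, up, dn] <;>
    simp only [eE_inl, eE_inr, up, dn, enhVector, Sum.elim_inl, Sum.elim_inr]
  · have hia := ia.isLt
    simp only [Pi.zero_apply]
    rw [if_neg]
    rintro ⟨c1, c2, c3⟩
    omega

end S19

/-- under the embedding `V × N ⊂ W × N₀` (`v ↦ (v,0)`, `x ↦ (x,xᵗ)`),
if `(v,x)` lies in the enhanced orbit `O_{μ;ν}` for `GL(V)` then the embedded pair
lies in the exotic `Sp(W)`-orbit with the same label `(μ;ν)`, and its `GL(W)`-orbit
in `W × N(W)` is `O_{μ∪μ; ν∪ν}` (both orbits having the same standard representative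
`(w₀, J_{λ∪λ})`). -/
theorem stmt19 (k : Type*) [Field k] [IsAlgClosed k] (m : ℕ) (d nh j kk : Fin m → ℕ)
    (hd : StrictAnti d) (hdpos : ∀ h, 0 < d h) (hnpos : ∀ h, 0 < nh h)
    (hsum : ∀ h, j h + kk h = d h) (hj : Antitone j) (hk : Antitone kk)
    (v : (Σ h : Fin m, Fin (nh h) × Fin (d h)) → k)
    (x : Matrix (Σ h : Fin m, Fin (nh h) × Fin (d h))
      (Σ h : Fin m, Fin (nh h) × Fin (d h)) k)
    (hvx : ∃ g : GL (Σ h : Fin m, Fin (nh h) × Fin (d h)) k,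
      v = (g : Matrix _ _ k) *ᵥ enhVector k m d nh j ∧
      x = (g : Matrix _ _ k) * jordanMatrix k m d nh * (↑g⁻¹ : Matrix _ _ k)) :
    (∃ g' : GL (Σ h : Fin m, Fin (2 * nh h) × Fin (d h)) k,
      g' ∈ sympGL k (omegaMat k m d nh) ∧
      embVec k m d nh v = (g' : Matrix _ _ k) *ᵥ enhVector k m d (fun h => 2 * nh h) j ∧
      embMatrix k m d nh x
        = (g' : Matrix _ _ k) * jordanMatrix k m d (fun h => 2 * nh h) *
          (↑g'⁻¹ : Matrix _ _ k)) ∧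
    (∃ g'' : GL (Σ h : Fin m, Fin (2 * nh h) × Fin (d h)) k,
      embVec k m d nh v = (g'' : Matrix _ _ k) *ᵥ enhVector k m d (fun h => 2 * nh h) j ∧
      embMatrix k m d nh x
        = (g'' : Matrix _ _ k) * jordanMatrix k m d (fun h => 2 * nh h) *
          (↑g''⁻¹ : Matrix _ _ k)) := by
  classical
  obtain ⟨g, hv, hx⟩ := hvx
  set gm : Matrix (Σ h : Fin m, Fin (nh h) × Fin (d h))
      (Σ h : Fin m, Fin (nh h) × Fin (d h)) k := (↑g : Matrix (Σ h : Fin m,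
        Fin (nh h) × Fin (d h)) (Σ h : Fin m, Fin (nh h) × Fin (d h)) k) with hgm
  set gi : Matrix (Σ h : Fin m, Fin (nh h) × Fin (d h))
      (Σ h : Fin m, Fin (nh h) × Fin (d h)) k := (↑g⁻¹ : Matrix (Σ h : Fin m,
        Fin (nh h) × Fin (d h)) (Σ h : Fin m, Fin (nh h) × Fin (d h)) k) with hgi
  have hgg : gm * gi = 1 := by
    rw [hgm, hgi, ← Units.val_mul, mul_inv_cancel, Units.val_one]
  have hgig : gi * gm = 1 := by
    rw [hgm, hgi, ← Units.val_mul, inv_mul_cancel, Units.val_one]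
  set e := S19.eE d nh with he
  have hval : ((Matrix.fromBlocks gm 0 0 giᵀ).submatrix e.symm e.symm) *
      ((Matrix.fromBlocks gi 0 0 gmᵀ).submatrix e.symm e.symm) = 1 := by
    rw [Matrix.submatrix_mul_equiv, Matrix.fromBlocks_multiply]
    simp only [Matrix.mul_zero, Matrix.zero_mul, add_zero, zero_add]
    rw [hgg, ← Matrix.transpose_mul, hgg, Matrix.transpose_one, Matrix.fromBlocks_one,
      Matrix.submatrix_one_equiv]
  have hinv : ((Matrix.fromBlocks gi 0 0 gmᵀ).submatrix e.symm e.symm) *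
      ((Matrix.fromBlocks gm 0 0 giᵀ).submatrix e.symm e.symm) = 1 := by
    rw [Matrix.submatrix_mul_equiv, Matrix.fromBlocks_multiply]
    simp only [Matrix.mul_zero, Matrix.zero_mul, add_zero, zero_add]
    rw [hgig, ← Matrix.transpose_mul, hgig, Matrix.transpose_one, Matrix.fromBlocks_one,
      Matrix.submatrix_one_equiv]
  set G : GL (Σ h : Fin m, Fin (2 * nh h) × Fin (d h)) k :=
    ⟨(Matrix.fromBlocks gm 0 0 giᵀ).submatrix e.symm e.symm,
     (Matrix.fromBlocks gi 0 0 gmᵀ).submatrix e.symm e.symm, hval, hinv⟩ with hG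
  have hGval : (G : Matrix _ _ k) = (Matrix.fromBlocks gm 0 0 giᵀ).submatrix e.symm e.symm := rfl
  have hGinv : (↑G⁻¹ : Matrix _ _ k)
      = (Matrix.fromBlocks gi 0 0 gmᵀ).submatrix e.symm e.symm := rfl
  have hvec : embVec k m d nh v
      = (G : Matrix _ _ k) *ᵥ enhVector k m d (fun h => 2 * nh h) j := by
    rw [hv, S19.embVec_eq d nh, S19.enhVector_eq d nh j, hGval, ← he,
      Matrix.submatrix_mulVec_equiv]
    have hcomp : (Sum.elim (enhVector k m d nh j) 0 ∘ e.symm) ∘ e.symm.symm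
        = Sum.elim (enhVector k m d nh j) 0 := by
      funext s
      simp
    rw [hcomp, Matrix.fromBlocks_mulVec]
    have h1 : Sum.elim (enhVector k m d nh j) (0 : (Σ h : Fin m, Fin (nh h) × Fin (d h)) → k) ∘ Sum.inl
        = enhVector k m d nh j := rfl
    have h2 : Sum.elim (enhVector k m d nh j) (0 : (Σ h : Fin m, Fin (nh h) × Fin (d h)) → k) ∘ Sum.inr = 0 := rfl
    rw [h1, h2]
    simp only [Matrix.zero_mulVec, Matrix.mulVec_zero, add_zero, zero_add]
  have hmat : embMatrix k m d nh x
      = (G : Matrix _ _ k) * jordanMatrix k m d (fun h => 2 * nh h) * (↑G⁻¹ : Matrix _ _ k) := by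
    rw [hx, S19.embMatrix_eq d nh, S19.jordan_eq d nh, hGval, hGinv, ← he,
      Matrix.submatrix_mul_equiv, Matrix.submatrix_mul_equiv,
      Matrix.fromBlocks_multiply, Matrix.fromBlocks_multiply]
    simp only [Matrix.mul_zero, Matrix.zero_mul, add_zero, zero_add,
      Matrix.transpose_mul, Matrix.mul_assoc]
  have hsymp : G ∈ sympGL k (omegaMat k m d nh) := by
    show (G : Matrix _ _ k)ᵀ * omegaMat k m d nh * (G : Matrix _ _ k) = omegaMat k m d nh
    rw [S19.omega_eq d nh, hGval, ← he, Matrix.transpose_submatrix,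
      Matrix.fromBlocks_transpose, Matrix.submatrix_mul_equiv, Matrix.submatrix_mul_equiv,
      Matrix.fromBlocks_multiply, Matrix.fromBlocks_multiply]
    simp only [Matrix.transpose_zero, Matrix.transpose_transpose, Matrix.mul_zero,
      Matrix.zero_mul, add_zero, zero_add, Matrix.mul_one, Matrix.one_mul,
      Matrix.mul_neg, Matrix.neg_mul, neg_zero]
    rw [← Matrix.transpose_mul, hgig, Matrix.transpose_one]
  exact ⟨⟨G, hsymp, hvec, hmat⟩, ⟨G, hvec, hmat⟩⟩
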